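/- arXiv:1805.11921 — 3 statements merged into one kernel-verified Lean document; each statement's English description precedes it below -/
import Mathlib

section
/- The squared number of directed walks of length l in a finite digraph G is bounded by the product of power sums of degrees: k_l^2 ≤ (∑_{v∈G} d_in(v)^l)(∑_{v∈G} d_out(v)^l), where k_l is the number of walks of length l (i.e., with l edges). -/
set_option linter.unusedSectionVars false

open Finset
open scoped NNReal

namespace SqCardWalks

variable {V : Type*} [Fintype V] [DecidableEq V]

noncomputable def chain : (n : ℕ) → (ℕ → V → V → ℝ≥0) → (V → ℝ≥0) → V → ℝ≥0
  | 0, _, h, v => h v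
  | n + 1, M, h, v => ∑ u, M 0 v u * chain n (fun j => M (j + 1)) h u

variable (E : V → V → Prop) [DecidableRel E]

noncomputable def chi (u v : V) : ℝ≥0 := if E u v then 1 else 0

noncomputable def din (v : V) : ℝ≥0 := ∑ u, chi E u v

noncomputable def dout (v : V) : ℝ≥0 := ∑ u, chi E v u

lemma chi_eq_one {u v : V} (h : E u v) : chi E u v = 1 := if_pos h

lemma din_ne_zero {u v : V} (h : E u v) : din E v ≠ 0 := by
  have h1 : chi E u v ≤ din E v :=
    Finset.single_le_sum (f := fun u => chi E u v) (fun i _ => zero_le) (mem_univ u)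
  rw [chi_eq_one E h] at h1
  exact fun h0 => by simp [h0] at h1

lemma dout_ne_zero {u v : V} (h : E u v) : dout E u ≠ 0 := by
  have h1 : chi E u v ≤ dout E u :=
    Finset.single_le_sum (f := fun w => chi E u w) (fun i _ => zero_le) (mem_univ v)
  rw [chi_eq_one E h] at h1
  exact fun h0 => by simp [h0] at h1

/-- The bridge between sums over tuples and the recursively defined `chain`. -/
lemma sum_chain (n : ℕ) (M : ℕ → V → V → ℝ≥0) (g h : V → ℝ≥0) :
    (∑ w : Fin (n + 1) → V, g (w 0) *
      ((∏ j : Fin n, M (j : ℕ) (w j.castSucc) (w j.succ)) * h (w (Fin.last n))))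
    = ∑ v, g v * chain n M h v := by
  induction n generalizing M g with
  | zero =>
    apply Fintype.sum_equiv (Equiv.funUnique (Fin 1) V)
    intro w
    simp [chain]
  | succ n ih =>
    rw [← (Fin.consEquiv (fun _ : Fin (n + 2) => V)).sum_comp, Fintype.sum_prod_type]
    refine Finset.sum_congr rfl fun v _ => ?_
    have key : ∀ w' : Fin (n + 1) → V,
        (∏ j : Fin (n + 1), M (j : ℕ) ((Fin.cons v w' : Fin (n + 2) → V) j.castSucc)
          ((Fin.cons v w' : Fin (n + 2) → V) j.succ))
        = M 0 v (w' 0) * ∏ j : Fin n, M ((j : ℕ) + 1) (w' j.castSucc) (w' j.succ) := by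
      intro w'
      rw [Fin.prod_univ_succ]
      have h2 : ∀ j : Fin n, M ((j.succ : Fin (n + 1)) : ℕ)
          ((Fin.cons v w' : Fin (n + 2) → V) j.succ.castSucc)
          ((Fin.cons v w' : Fin (n + 2) → V) j.succ.succ)
          = M ((j : ℕ) + 1) (w' j.castSucc) (w' j.succ) := by
        intro j
        rw [← Fin.succ_castSucc, Fin.cons_succ, Fin.cons_succ, Fin.val_succ]
      rw [Finset.prod_congr rfl (fun j _ => h2 j)]
      simp
    have hlast : ∀ w' : Fin (n + 1) → V,
        (Fin.cons v w' : Fin (n + 2) → V) (Fin.last (n + 1)) = w' (Fin.last n) := by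
      intro w'
      rw [← Fin.succ_last, Fin.cons_succ]
    calc (∑ w' : Fin (n + 1) → V,
            g ((Fin.consEquiv fun _ : Fin (n + 2) => V) (v, w') 0) *
            ((∏ j : Fin (n + 1), M (j : ℕ)
                ((Fin.consEquiv fun _ : Fin (n + 2) => V) (v, w') j.castSucc)
                ((Fin.consEquiv fun _ : Fin (n + 2) => V) (v, w') j.succ)) *
              h ((Fin.consEquiv fun _ : Fin (n + 2) => V) (v, w') (Fin.last (n + 1)))))
        = ∑ w' : Fin (n + 1) → V,
            g v * ((fun u => M 0 v u) (w' 0) *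
              ((∏ j : Fin n, M ((j : ℕ) + 1) (w' j.castSucc) (w' j.succ)) * h (w' (Fin.last n)))) := by
          refine Finset.sum_congr rfl fun w' _ => ?_
          have e1 : (Fin.consEquiv fun _ : Fin (n + 2) => V) (v, w') = Fin.cons v w' := rfl
          rw [e1, key w', hlast w', Fin.cons_zero]
          ring
      _ = g v * ∑ w' : Fin (n + 1) → V,
            (fun u => M 0 v u) (w' 0) *
              ((∏ j : Fin n, M ((j : ℕ) + 1) (w' j.castSucc) (w' j.succ)) * h (w' (Fin.last n))) := by
          rw [Finset.mul_sum]
      _ = g v * chain (n + 1) M h v := by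
          rw [ih (fun j => M (j + 1)) (fun u => M 0 v u)]
          rfl

/-- The family of weight kernels. `c` is the "center" factor inserted at step `i`. -/
noncomputable def MF (c : V → ℝ≥0) (i : ℕ) : ℕ → V → V → ℝ≥0 := fun j u v =>
  chi E u v * (if j < i then (din E v)⁻¹ else (dout E u)⁻¹) * (if j = i then c u else 1)

lemma MF_succ (c : V → ℝ≥0) (i : ℕ) : (fun j => MF E c (i + 1) (j + 1)) = MF E c i := by
  funext j u v
  simp only [MF, Nat.add_lt_add_iff_right, Nat.add_right_cancel_iff]

lemma MF_zero_succ (c : V → ℝ≥0) : (fun j => MF E c 0 (j + 1)) = MF E (fun _ => 1) 0 := by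
  funext j u v
  simp [MF]

lemma chain_MF_zero_one_le_one : ∀ n v, chain n (MF E (fun _ => 1) 0) 1 v ≤ 1 := by
  intro n
  induction n with
  | zero => intro v; simp [chain]
  | succ n ih =>
    intro v
    show (∑ u, MF E (fun _ => 1) 0 0 v u * chain n (fun j => MF E (fun _ => 1) 0 (j + 1)) 1 u) ≤ 1
    rw [MF_zero_succ]
    calc (∑ u, MF E (fun _ => 1) 0 0 v u * chain n (MF E (fun _ => 1) 0) 1 u)
        ≤ ∑ u, MF E (fun _ => 1) 0 0 v u * 1 :=
          Finset.sum_le_sum fun u _ => mul_le_mul_right (ih u) _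
      _ = ∑ u, chi E v u * (dout E v)⁻¹ := by
          refine Finset.sum_congr rfl fun u _ => ?_
          simp [MF]
      _ = (∑ u, chi E v u) * (dout E v)⁻¹ := by rw [← Finset.sum_mul]
      _ ≤ 1 := mul_inv_le_one

lemma chain_MF_zero_le (c : V → ℝ≥0) (n : ℕ) (v : V) :
    chain (n + 1) (MF E c 0) 1 v ≤ c v := by
  show (∑ u, MF E c 0 0 v u * chain n (fun j => MF E c 0 (j + 1)) 1 u) ≤ c v
  rw [MF_zero_succ]
  calc (∑ u, MF E c 0 0 v u * chain n (MF E (fun _ => 1) 0) 1 u)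
      ≤ ∑ u, MF E c 0 0 v u * 1 :=
        Finset.sum_le_sum fun u _ => mul_le_mul_right (chain_MF_zero_one_le_one E n u) _
    _ = ∑ u, chi E v u * (dout E v)⁻¹ * c v := by
        refine Finset.sum_congr rfl fun u _ => ?_
        simp [MF]
    _ = ((∑ u, chi E v u) * (dout E v)⁻¹) * c v := by
        rw [← Finset.sum_mul, ← Finset.sum_mul]
    _ ≤ 1 * c v := mul_le_mul_left mul_inv_le_one _
    _ = c v := one_mul _

lemma sum_chain_MF_le (c : V → ℝ≥0) :
    ∀ (i n : ℕ), 0 < n → (∑ v, chain (i + n) (MF E c i) 1 v) ≤ ∑ v, c v := by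
  intro i
  induction i with
  | zero =>
    intro n hn
    obtain ⟨m, rfl⟩ := Nat.exists_eq_succ_of_ne_zero hn.ne'
    simp only [Nat.zero_add]
    exact Finset.sum_le_sum fun v _ => chain_MF_zero_le E c m v
  | succ i ih =>
    intro n hn
    have hrw : i + 1 + n = (i + n) + 1 := by omega
    rw [hrw]
    have step : (∑ v, chain ((i + n) + 1) (MF E c (i + 1)) 1 v)
        ≤ ∑ u, chain (i + n) (MF E c i) 1 u := by
      have : ∀ v, chain ((i + n) + 1) (MF E c (i + 1)) 1 v
          = ∑ u, chi E v u * (din E u)⁻¹ * chain (i + n) (MF E c i) 1 u := by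
        intro v
        show (∑ u, MF E c (i + 1) 0 v u * chain (i + n) (fun j => MF E c (i + 1) (j + 1)) 1 u) = _
        rw [MF_succ]
        refine Finset.sum_congr rfl fun u _ => ?_
        simp [MF, Nat.succ_ne_zero, (Nat.succ_pos i)]
      rw [Finset.sum_congr rfl fun v _ => this v, Finset.sum_comm]
      calc (∑ u, ∑ v, chi E v u * (din E u)⁻¹ * chain (i + n) (MF E c i) 1 u)
          = ∑ u, ((∑ v, chi E v u) * (din E u)⁻¹) * chain (i + n) (MF E c i) 1 u := by
            refine Finset.sum_congr rfl fun u _ => ?_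
            rw [Finset.sum_mul, Finset.sum_mul]
        _ ≤ ∑ u, 1 * chain (i + n) (MF E c i) 1 u :=
            Finset.sum_le_sum fun u _ => mul_le_mul_left mul_inv_le_one _
        _ = ∑ u, chain (i + n) (MF E c i) 1 u := by simp
    exact le_trans step (ih n hn)


/-! ### Generalized Hölder via AM-GM -/

lemma prod_rpow_nnreal {κ : Type*} (T : Finset κ) (f : κ → ℝ≥0) (r : ℝ) :
    (∏ t ∈ T, f t) ^ r = ∏ t ∈ T, f t ^ r := by
  induction T using Finset.cons_induction with
  | empty => simp
  | cons a s ha ih => rw [Finset.prod_cons, Finset.prod_cons, NNReal.mul_rpow, ih]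

lemma holder_count {ι κ : Type*} (W : Finset ι) (T : Finset κ)
    (z : κ → ι → ℝ≥0) (m : κ → ℕ) (S : κ → ℝ≥0)
    (hle : ∀ t ∈ T, (∑ w ∈ W, z t w) ≤ S t)
    (hid : ∀ w ∈ W, (∏ t ∈ T, z t w ^ m t) = 1)
    (hN : 0 < ∑ t ∈ T, m t) :
    (W.card : ℝ≥0) ^ (∑ t ∈ T, m t) ≤ ∏ t ∈ T, S t ^ m t := by
  set N : ℕ := ∑ t ∈ T, m t with hNdef
  rcases W.eq_empty_or_nonempty with rfl | ⟨w₀, hw₀⟩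
  · simp [zero_pow hN.ne']
  have hz0 : ∀ w ∈ W, ∀ t ∈ T, m t ≠ 0 → z t w ≠ 0 := by
    intro w hw t ht hm hz
    have h0 : (∏ t ∈ T, z t w ^ m t) = 0 :=
      Finset.prod_eq_zero ht (by rw [hz]; exact zero_pow hm)
    rw [hid w hw] at h0
    exact one_ne_zero h0
  have hS0 : ∀ t ∈ T, m t ≠ 0 → S t ≠ 0 := by
    intro t ht hm hS
    have h1 := hle t ht
    rw [hS, le_zero_iff] at h1
    exact hz0 w₀ hw₀ t ht hm (by
      have := Finset.sum_eq_zero_iff.mp h1 w₀ hw₀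
      exact this)
  have hC : (0 : ℝ≥0) < ∏ t ∈ T, S t ^ m t := by
    refine Finset.prod_pos fun t ht => ?_
    rcases Nat.eq_zero_or_pos (m t) with h | h
    · simp [h]
    · exact pos_iff_ne_zero.mpr (pow_ne_zero _ (hS0 t ht h.ne'))
  set C : ℝ≥0 := ∏ t ∈ T, S t ^ m t with hCdef
  have hNR : ((N : ℝ)) ≠ 0 := Nat.cast_ne_zero.mpr hN.ne'
  set r : ℝ := (N : ℝ)⁻¹ with hrdef
  have hCr_pos : 0 < C ^ r := NNReal.rpow_pos hC
  have hpoint : ∀ w ∈ W,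
      1 ≤ (∑ t ∈ T, ((m t : ℝ≥0) / (N : ℝ≥0)) * (z t w / S t)) * C ^ r := by
    intro w hw
    have hw1 : (∑ t ∈ T, (m t : ℝ≥0) / (N : ℝ≥0)) = 1 := by
      rw [← Finset.sum_div, ← Nat.cast_sum, ← hNdef]
      exact div_self (by exact_mod_cast hN.ne')
    have hg := NNReal.geom_mean_le_arith_mean_weighted T
      (fun t => (m t : ℝ≥0) / (N : ℝ≥0)) (fun t => z t w / S t) hw1
    have hL : (∏ t ∈ T, (z t w / S t) ^ ((((m t : ℝ≥0) / (N : ℝ≥0)) : ℝ≥0) : ℝ))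
        = (C ^ r)⁻¹ := by
      have hexp : ∀ t : κ, ((((m t : ℝ≥0) / (N : ℝ≥0)) : ℝ≥0) : ℝ) = (m t : ℕ) * r := by
        intro t
        push_cast
        rw [div_eq_mul_inv]
      calc (∏ t ∈ T, (z t w / S t) ^ ((((m t : ℝ≥0) / (N : ℝ≥0)) : ℝ≥0) : ℝ))
          = ∏ t ∈ T, (z t w ^ m t) ^ r / (S t ^ m t) ^ r := by
            refine Finset.prod_congr rfl fun t _ => ?_
            rw [hexp t, NNReal.div_rpow, NNReal.rpow_natCast_mul, NNReal.rpow_natCast_mul]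
        _ = (∏ t ∈ T, (z t w ^ m t) ^ r) / ∏ t ∈ T, (S t ^ m t) ^ r :=
            Finset.prod_div_distrib _ _
        _ = (C ^ r)⁻¹ := by
            rw [← prod_rpow_nnreal, ← prod_rpow_nnreal, hid w hw, NNReal.one_rpow, ← hCdef,
              one_div]
    rw [hL] at hg
    calc (1 : ℝ≥0) = (C ^ r)⁻¹ * C ^ r := (inv_mul_cancel₀ hCr_pos.ne').symm
      _ ≤ (∑ t ∈ T, ((m t : ℝ≥0) / (N : ℝ≥0)) * (z t w / S t)) * C ^ r :=
          mul_le_mul_left hg _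
  have hsum : (W.card : ℝ≥0) ≤ C ^ r := by
    have h1 : (W.card : ℝ≥0)
        ≤ ∑ w ∈ W, (∑ t ∈ T, ((m t : ℝ≥0) / (N : ℝ≥0)) * (z t w / S t)) * C ^ r := by
      rw [Finset.card_eq_sum_ones, Nat.cast_sum]
      exact Finset.sum_le_sum fun w hw => by simpa using hpoint w hw
    have h2 : (∑ w ∈ W, (∑ t ∈ T, ((m t : ℝ≥0) / (N : ℝ≥0)) * (z t w / S t)) * C ^ r)
        ≤ C ^ r := by
      rw [← Finset.sum_mul]
      have h3 : (∑ w ∈ W, ∑ t ∈ T, ((m t : ℝ≥0) / (N : ℝ≥0)) * (z t w / S t)) ≤ 1 := by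
        rw [Finset.sum_comm]
        calc (∑ t ∈ T, ∑ w ∈ W, ((m t : ℝ≥0) / (N : ℝ≥0)) * (z t w / S t))
            = ∑ t ∈ T, ((m t : ℝ≥0) / (N : ℝ≥0)) * ((∑ w ∈ W, z t w) / S t) := by
              refine Finset.sum_congr rfl fun t _ => ?_
              rw [← Finset.mul_sum, Finset.sum_div]
          _ ≤ ∑ t ∈ T, ((m t : ℝ≥0) / (N : ℝ≥0)) * 1 := by
              refine Finset.sum_le_sum fun t ht => mul_le_mul_right ?_ _
              rcases eq_or_ne (S t) 0 with h | h
              · simp [h]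
              · rw [div_le_one (pos_iff_ne_zero.mpr h)]
                exact hle t ht
          _ = 1 := by
              simp only [mul_one]
              rw [← Finset.sum_div, ← Nat.cast_sum, ← hNdef]
              exact div_self (by exact_mod_cast hN.ne')
      calc (∑ w ∈ W, ∑ t ∈ T, ((m t : ℝ≥0) / (N : ℝ≥0)) * (z t w / S t)) * C ^ r
          ≤ 1 * C ^ r := mul_le_mul_left h3 _
        _ = C ^ r := one_mul _
    exact le_trans h1 h2
  calc (W.card : ℝ≥0) ^ N ≤ (C ^ r) ^ N := pow_le_pow_left₀ zero_le hsum N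
    _ = C := by
      rw [← NNReal.rpow_natCast (C ^ r) N, ← NNReal.rpow_mul, hrdef,
        inv_mul_cancel₀ hNR, NNReal.rpow_one]

/-! ### The key pointwise identity -/

lemma pow_helper (x y d : ℝ≥0) (L i : ℕ) (h : i ≤ L) :
    (x ^ L * d) ^ (L - i) * (y ^ L * d) ^ i = (x ^ (L - i) * y ^ i * d) ^ L := by
  have hs : L - i + i = L := Nat.sub_add_cancel h
  calc (x ^ L * d) ^ (L - i) * (y ^ L * d) ^ i
      = (x ^ (L * (L - i)) * y ^ (L * i)) * (d ^ (L - i) * d ^ i) := by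
        rw [mul_pow, mul_pow, ← pow_mul, ← pow_mul]
        ring
    _ = (x ^ (L * (L - i)) * y ^ (L * i)) * d ^ L := by rw [← pow_add, hs]
    _ = (x ^ (L - i) * y ^ i * d) ^ L := by
        rw [mul_pow, mul_pow, ← pow_mul, ← pow_mul, Nat.mul_comm (L - i) L,
          Nat.mul_comm i L]

lemma key_identity (l : ℕ) (hl : 2 ≤ l) (a b : ℕ → ℝ≥0)
    (ha : ∀ j, j < l → a j ≠ 0) (hb : ∀ j, j < l → b j ≠ 0) :
    (∏ i ∈ Finset.Ico 1 l,
      ((a (i - 1) ^ l * ∏ j ∈ Finset.range l, if j < i then (a j)⁻¹ else (b j)⁻¹) ^ (l - i) *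
       (b i ^ l * ∏ j ∈ Finset.range l, if j < i then (a j)⁻¹ else (b j)⁻¹) ^ i)) = 1 := by
  obtain ⟨k, rfl⟩ : ∃ k, l = k + 2 := ⟨l - 2, by omega⟩
  set D : ℕ → ℝ≥0 := fun i => ∏ j ∈ Finset.range (k + 2), if j < i then (a j)⁻¹ else (b j)⁻¹
    with hD
  set PA : ℝ≥0 := ∏ j ∈ Finset.range (k + 2), a j ^ (k + 1 - j) with hPA
  set PB : ℝ≥0 := ∏ j ∈ Finset.range (k + 2), b j ^ j with hPB
  have hPAne : PA ≠ 0 := by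
    rw [hPA]
    rw [Finset.prod_ne_zero_iff]
    intro j hj
    exact pow_ne_zero _ (ha j (Finset.mem_range.mp hj))
  have hPBne : PB ≠ 0 := by
    rw [hPB]
    rw [Finset.prod_ne_zero_iff]
    intro j hj
    exact pow_ne_zero _ (hb j (Finset.mem_range.mp hj))
  have step1 : ∀ i ∈ Finset.Ico 1 (k + 2),
      (a (i - 1) ^ (k + 2) * D i) ^ (k + 2 - i) * (b i ^ (k + 2) * D i) ^ i
      = (a (i - 1) ^ (k + 2 - i) * b i ^ i * D i) ^ (k + 2) := by
    intro i hi
    rw [Finset.mem_Ico] at hi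
    exact pow_helper _ _ _ _ _ (le_of_lt hi.2)
  rw [Finset.prod_congr rfl step1, Finset.prod_pow]
  have hQ : (∏ i ∈ Finset.Ico 1 (k + 2), (a (i - 1) ^ (k + 2 - i) * b i ^ i * D i)) = 1 := by
    rw [Finset.prod_mul_distrib, Finset.prod_mul_distrib]
    have hPA' : PA = ∏ j ∈ Finset.range (k + 1), a j ^ (k + 1 - j) := by
      rw [hPA]
      rw [Finset.prod_range_succ]
      simp
    have hA : (∏ i ∈ Finset.Ico 1 (k + 2), a (i - 1) ^ (k + 2 - i)) = PA := by
      rw [Finset.prod_Ico_eq_prod_range, show k + 2 - 1 = k + 1 by omega, hPA']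
      refine Finset.prod_congr rfl fun m _ => ?_
      rw [show 1 + m - 1 = m by omega, show k + 2 - (1 + m) = k + 1 - m by omega]
    have hB : (∏ i ∈ Finset.Ico 1 (k + 2), b i ^ i) = PB := by
      rw [Finset.prod_Ico_eq_prod_range, hPB, show k + 2 - 1 = k + 1 by omega]
      rw [Finset.prod_range_succ' (fun j => b j ^ j) (k + 1)]
      simp only [pow_zero, mul_one]
      refine Finset.prod_congr rfl fun m _ => by rw [Nat.add_comm 1 m]
    have hDprod : (∏ i ∈ Finset.Ico 1 (k + 2), D i) = PA⁻¹ * PB⁻¹ := by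
      rw [hD]
      rw [Finset.prod_comm]
      have hinner : ∀ j ∈ Finset.range (k + 2),
          (∏ i ∈ Finset.Ico 1 (k + 2), if j < i then (a j)⁻¹ else (b j)⁻¹)
          = ((a j) ^ (k + 1 - j))⁻¹ * ((b j) ^ j)⁻¹ := by
        intro j hj
        rw [Finset.mem_range] at hj
        rw [Finset.prod_ite (fun _ => (a j)⁻¹) (fun _ => (b j)⁻¹)]
        rw [Finset.prod_const, Finset.prod_const]
        have hf1 : (Finset.Ico 1 (k + 2)).filter (fun i => j < i) = Finset.Ico (j + 1) (k + 2) := by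
          ext i
          simp only [Finset.mem_filter, Finset.mem_Ico]
          omega
        have hf2 : (Finset.Ico 1 (k + 2)).filter (fun i => ¬ j < i) = Finset.Ico 1 (j + 1) := by
          ext i
          simp only [Finset.mem_filter, Finset.mem_Ico]
          omega
        rw [hf1, hf2, Nat.card_Ico, Nat.card_Ico,
          show k + 2 - (j + 1) = k + 1 - j by omega, show j + 1 - 1 = j by omega,
          inv_pow, inv_pow]
      rw [Finset.prod_congr rfl hinner, Finset.prod_mul_distrib, ← Finset.prod_inv_distrib,
        ← Finset.prod_inv_distrib]
    rw [hA, hB, hDprod, mul_mul_mul_comm, mul_inv_cancel₀ hPAne, mul_inv_cancel₀ hPBne, mul_one]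
  rw [hQ, one_pow]



/-! ### Per-walk reduction of the weight products -/

lemma prod_MF_walk (l : ℕ) (w : Fin (l + 1) → V)
    (hw : ∀ j : Fin l, E (w j.castSucc) (w j.succ))
    (c : V → ℝ≥0) (i : ℕ) (hil : i < l) :
    (∏ j : Fin l, MF E c i (j : ℕ) (w j.castSucc) (w j.succ))
    = c (w ⟨i, by omega⟩) *
      ∏ j : Fin l, (if (j : ℕ) < i then (din E (w j.succ))⁻¹ else (dout E (w j.castSucc))⁻¹) := by
  unfold MF
  rw [Finset.prod_mul_distrib, Finset.prod_mul_distrib]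
  have h1 : (∏ j : Fin l, chi E (w j.castSucc) (w j.succ)) = 1 :=
    Finset.prod_eq_one fun j _ => chi_eq_one E (hw j)
  have h2 : (∏ j : Fin l, (if (j : ℕ) = i then c (w j.castSucc) else 1))
      = c (w ⟨i, by omega⟩) := by
    have hcond : ∀ j : Fin l, ((j : ℕ) = i) = (j = (⟨i, hil⟩ : Fin l)) := by
      intro j
      simp [Fin.ext_iff]
    calc (∏ j : Fin l, (if (j : ℕ) = i then c (w j.castSucc) else 1))
        = ∏ j : Fin l, (if j = (⟨i, hil⟩ : Fin l) then c (w j.castSucc) else 1) := by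
          refine Finset.prod_congr rfl fun j _ => ?_
          simp only [hcond j]
      _ = c (w (Fin.castSucc ⟨i, hil⟩)) := by
          rw [Finset.prod_ite_eq' Finset.univ (⟨i, hil⟩ : Fin l) (fun j => c (w j.castSucc))]
          simp
      _ = c (w ⟨i, by omega⟩) := by
          congr 1
  rw [h1, h2, one_mul, mul_comm]

lemma sum_zMF_le (l : ℕ) (c : V → ℝ≥0) (i : ℕ) (h2 : i < l) :
    (∑ w ∈ Finset.univ.filter
        (fun w : Fin (l + 1) → V => ∀ j : Fin l, E (w j.castSucc) (w j.succ)),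
      ∏ j : Fin l, MF E c i (j : ℕ) (w j.castSucc) (w j.succ))
    ≤ ∑ v, c v := by
  calc (∑ w ∈ Finset.univ.filter
        (fun w : Fin (l + 1) → V => ∀ j : Fin l, E (w j.castSucc) (w j.succ)),
      ∏ j : Fin l, MF E c i (j : ℕ) (w j.castSucc) (w j.succ))
      ≤ ∑ w : Fin (l + 1) → V, ∏ j : Fin l, MF E c i (j : ℕ) (w j.castSucc) (w j.succ) :=
        Finset.sum_le_sum_of_subset (Finset.filter_subset _ _)
    _ = ∑ v, chain l (MF E c i) 1 v := by
        have hbr := sum_chain l (MF E c i) 1 1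
        simpa using hbr
    _ ≤ ∑ v, c v := by
        have h3 := sum_chain_MF_le E c i (l - i) (by omega)
        rwa [show i + (l - i) = l by omega] at h3

lemma prod_z_eq_one (l : ℕ) (hl : 2 ≤ l) (w : Fin (l + 1) → V)
    (hw : ∀ j : Fin l, E (w j.castSucc) (w j.succ)) :
    (∏ t ∈ (Finset.Ico 1 l) ×ˢ (Finset.univ : Finset Bool),
      (∏ j : Fin l, MF E
          (if t.2 then (fun v => din E v ^ l) else (fun v => dout E v ^ l)) t.1 (j : ℕ)
          (w j.castSucc) (w j.succ)) ^ (if t.2 then l - t.1 else t.1)) = 1 := by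
  set a : ℕ → ℝ≥0 := fun t => if h : t + 1 < l + 1 then din E (w ⟨t + 1, h⟩) else 1 with haf
  set b : ℕ → ℝ≥0 := fun t => if h : t < l + 1 then dout E (w ⟨t, h⟩) else 1 with hbf
  have hca : ∀ j : Fin l, din E (w j.succ) = a (j : ℕ) := by
    intro j
    rw [haf]
    simp only
    rw [dif_pos (by omega : (j : ℕ) + 1 < l + 1)]
    congr 1
  have hcb : ∀ j : Fin l, dout E (w j.castSucc) = b (j : ℕ) := by
    intro j
    rw [hbf]
    simp only
    rw [dif_pos (by omega : (j : ℕ) < l + 1)]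
    congr 1
  have ha : ∀ t, t < l → a t ≠ 0 := by
    intro t ht
    rw [← hca ⟨t, ht⟩]
    exact din_ne_zero E (hw ⟨t, ht⟩)
  have hb : ∀ t, t < l → b t ≠ 0 := by
    intro t ht
    rw [← hcb ⟨t, ht⟩]
    exact dout_ne_zero E (hw ⟨t, ht⟩)
  rw [Finset.prod_product]
  have hstep : ∀ i ∈ Finset.Ico 1 l,
      (∏ b' : Bool,
        (∏ j : Fin l, MF E
          (if b' then (fun v => din E v ^ l) else (fun v => dout E v ^ l)) i (j : ℕ)
          (w j.castSucc) (w j.succ)) ^ (if b' then l - i else i))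
      = (a (i - 1) ^ l * ∏ j ∈ Finset.range l, if j < i then (a j)⁻¹ else (b j)⁻¹) ^ (l - i) *
        (b i ^ l * ∏ j ∈ Finset.range l, if j < i then (a j)⁻¹ else (b j)⁻¹) ^ i := by
    intro i hi
    rw [Finset.mem_Ico] at hi
    rw [Fintype.prod_bool]
    simp only [eq_self_iff_true, if_true, Bool.false_eq_true, if_false]
    rw [prod_MF_walk E l w hw _ i hi.2, prod_MF_walk E l w hw _ i hi.2]
    have hP : (∏ j : Fin l,
          if (j : ℕ) < i then (din E (w j.succ))⁻¹ else (dout E (w j.castSucc))⁻¹)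
        = ∏ j ∈ Finset.range l, if j < i then (a j)⁻¹ else (b j)⁻¹ := by
      rw [← Fin.prod_univ_eq_prod_range (fun j => if j < i then (a j)⁻¹ else (b j)⁻¹) l]
      refine Finset.prod_congr rfl fun j _ => ?_
      rw [hca j, hcb j]
    have hcen1 : din E (w ⟨i, by omega⟩) = a (i - 1) := by
      rw [haf]
      simp only
      rw [dif_pos (by omega : i - 1 + 1 < l + 1)]
      exact congrArg (din E) (congrArg w (Fin.ext (by simp; omega)))
    have hcen2 : dout E (w ⟨i, by omega⟩) = b i := by
      rw [hbf]
      simp only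
      rw [dif_pos (by omega : i < l + 1)]
    rw [hP, hcen1, hcen2]
  rw [Finset.prod_congr rfl hstep]
  exact key_identity l hl a b ha hb

end SqCardWalks

/-- The squared number of directed walks of length `l` in a finite digraph is
bounded by the product of the power sums of in- and out-degrees:
`k_l² ≤ (∑_v d_in(v)^l) · (∑_v d_out(v)^l)`. -/
theorem sq_card_walks_le {V : Type*} [Fintype V] [DecidableEq V]
    (E : V → V → Prop) [DecidableRel E] (l : ℕ) :
    ((Finset.univ.filter fun w : Fin (l + 1) → V =>
        ∀ i : Fin l, E (w i.castSucc) (w i.succ)).card) ^ 2 ≤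
      (∑ v, ((Finset.univ.filter fun u => E u v).card) ^ l) *
      (∑ v, ((Finset.univ.filter fun u => E v u).card) ^ l) := by
  classical
  open SqCardWalks in
  rcases Nat.lt_or_ge l 2 with hl | hl
  · interval_cases l
    · -- l = 0
      have h : (Finset.univ.filter fun w : Fin (0 + 1) → V =>
          ∀ i : Fin 0, E (w i.castSucc) (w i.succ)) = Finset.univ :=
        Finset.filter_true_of_mem fun w _ => fun i => i.elim0
      rw [h]
      simp only [pow_zero, Finset.sum_const, Finset.card_univ, smul_eq_mul, mul_one,
        Finset.card_univ]
      rw [show Fintype.card (Fin (0 + 1) → V) = Fintype.card V from by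
        simp [Fintype.card_fun]]
      rw [pow_two]
    · -- l = 1
      simp only [pow_one]
      have h1 : (Finset.univ.filter fun w : Fin (1 + 1) → V =>
          ∀ i : Fin 1, E (w i.castSucc) (w i.succ)).card
          = ∑ v, (Finset.univ.filter fun u => E u v).card := by
        rw [Finset.card_filter]
        have e1 : (∑ w : Fin (1 + 1) → V,
              if (∀ i : Fin 1, E (w i.castSucc) (w i.succ)) then (1 : ℕ) else 0)
            = ∑ p : V × V, if E p.1 p.2 then 1 else 0 :=
          Fintype.sum_equiv (piFinTwoEquiv (fun _ : Fin 2 => V)) _ _ (fun w => by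
            simp [Fin.forall_fin_one])
        rw [e1, Fintype.sum_prod_type, Finset.sum_comm]
        exact Finset.sum_congr rfl fun v _ => (Finset.card_filter _ _).symm
      have h2 : (Finset.univ.filter fun w : Fin (1 + 1) → V =>
          ∀ i : Fin 1, E (w i.castSucc) (w i.succ)).card
          = ∑ v, (Finset.univ.filter fun u => E v u).card := by
        rw [Finset.card_filter]
        have e1 : (∑ w : Fin (1 + 1) → V,
              if (∀ i : Fin 1, E (w i.castSucc) (w i.succ)) then (1 : ℕ) else 0)
            = ∑ p : V × V, if E p.1 p.2 then 1 else 0 :=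
          Fintype.sum_equiv (piFinTwoEquiv (fun _ : Fin 2 => V)) _ _ (fun w => by
            simp [Fin.forall_fin_one])
        rw [e1, Fintype.sum_prod_type]
        exact Finset.sum_congr rfl fun v _ => (Finset.card_filter _ _).symm
      rw [pow_two]
      nth_rewrite 2 [h2]
      rw [h1]
  · -- main case : 2 ≤ l
    set W : Finset (Fin (l + 1) → V) := Finset.univ.filter fun w : Fin (l + 1) → V =>
        ∀ i : Fin l, E (w i.castSucc) (w i.succ) with hWdef
    set Sin : ℝ≥0 := ∑ v, din E v ^ l with hSin
    set Sout : ℝ≥0 := ∑ v, dout E v ^ l with hSout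
    set K : ℕ := ∑ i ∈ Finset.Ico 1 l, i with hK
    have hrefl : (∑ i ∈ Finset.Ico 1 l, (l - i)) = K := by
      rw [hK, Finset.sum_Ico_eq_sum_range, Finset.sum_Ico_eq_sum_range]
      rw [← Finset.sum_range_reflect (fun j => 1 + j) (l - 1)]
      refine Finset.sum_congr rfl fun j hj => ?_
      rw [Finset.mem_range] at hj
      omega
    have hKpos : 0 < K := by
      rw [hK]
      refine Finset.sum_pos' (fun i _ => Nat.zero_le i) ⟨1, ?_, by omega⟩
      rw [Finset.mem_Ico]
      omega
    have hmain := holder_count (W := W)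
      (T := (Finset.Ico 1 l) ×ˢ (Finset.univ : Finset Bool))
      (z := fun t w => ∏ j : Fin l, MF E
          (if t.2 then (fun v => din E v ^ l) else (fun v => dout E v ^ l)) t.1 (j : ℕ)
          (w j.castSucc) (w j.succ))
      (m := fun t => if t.2 then l - t.1 else t.1)
      (S := fun t => if t.2 then Sin else Sout)
      (by
        rintro ⟨i, b⟩ ht
        rw [Finset.mem_product, Finset.mem_Ico] at ht
        cases b
        · simpa [hSout] using sum_zMF_le E l (fun v => dout E v ^ l) i ht.1.2
        · simpa [hSin] using sum_zMF_le E l (fun v => din E v ^ l) i ht.1.2)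
      (by
        intro w hw
        have hwalk : ∀ j : Fin l, E (w j.castSucc) (w j.succ) :=
          (Finset.mem_filter.mp hw).2
        exact prod_z_eq_one E l hl w hwalk)
      (by
        rw [Finset.sum_product]
        have hper : ∀ i ∈ Finset.Ico 1 l,
            (∑ b : Bool, if b then l - i else i) = l := by
          intro i hi
          rw [Finset.mem_Ico] at hi
          rw [Fintype.sum_bool]
          simp only [if_true, Bool.false_eq_true, if_false]
          omega
        rw [Finset.sum_congr rfl hper, Finset.sum_const, Nat.card_Ico, smul_eq_mul]
        exact Nat.mul_pos (by omega) (by omega))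
    have hN2K : (∑ t ∈ (Finset.Ico 1 l) ×ˢ (Finset.univ : Finset Bool),
        (if t.2 then l - t.1 else t.1)) = 2 * K := by
      rw [Finset.sum_product]
      have hper : ∀ i ∈ Finset.Ico 1 l,
          (∑ b : Bool, if b then l - i else i) = (l - i) + i := by
        intro i _
        rw [Fintype.sum_bool]
        simp
      rw [Finset.sum_congr rfl hper, Finset.sum_add_distrib, hrefl, hK, two_mul]
    have hSm : (∏ t ∈ (Finset.Ico 1 l) ×ˢ (Finset.univ : Finset Bool),
        (if t.2 then Sin else Sout) ^ (if t.2 then l - t.1 else t.1)) = (Sin * Sout) ^ K := by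
      rw [Finset.prod_product]
      have hper : ∀ i ∈ Finset.Ico 1 l,
          (∏ b : Bool, (if b then Sin else Sout) ^ (if b then l - i else i))
          = Sin ^ (l - i) * Sout ^ i := by
        intro i _
        rw [Fintype.prod_bool]
        simp
      rw [Finset.prod_congr rfl hper, Finset.prod_mul_distrib,
        Finset.prod_pow_eq_pow_sum, Finset.prod_pow_eq_pow_sum, hrefl, ← hK, mul_pow]
    rw [hN2K, hSm] at hmain
    have hfin : ((W.card : ℝ≥0)) ^ 2 ≤ Sin * Sout := by
      refine le_of_pow_le_pow_left₀ hKpos.ne' zero_le ?_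
      rw [← pow_mul]
      exact hmain
    have hdin : ∀ v, din E v = ((Finset.univ.filter fun u => E u v).card : ℝ≥0) := by
      intro v
      rw [din, Finset.card_filter, Nat.cast_sum]
      refine Finset.sum_congr rfl fun u _ => ?_
      by_cases h : E u v <;> simp [chi, h]
    have hdout : ∀ v, dout E v = ((Finset.univ.filter fun u => E v u).card : ℝ≥0) := by
      intro v
      rw [dout, Finset.card_filter, Nat.cast_sum]
      refine Finset.sum_congr rfl fun u _ => ?_
      by_cases h : E v u <;> simp [chi, h]
    have hSin' : Sin = ((∑ v, (Finset.univ.filter fun u => E u v).card ^ l : ℕ) : ℝ≥0) := by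
      rw [hSin, Nat.cast_sum]
      exact Finset.sum_congr rfl fun v _ => by rw [hdin v, Nat.cast_pow]
    have hSout' : Sout = ((∑ v, (Finset.univ.filter fun u => E v u).card ^ l : ℕ) : ℝ≥0) := by
      rw [hSout, Nat.cast_sum]
      exact Finset.sum_congr rfl fun v _ => by rw [hdout v, Nat.cast_pow]
    rw [hSin', hSout'] at hfin
    exact_mod_cast hfin
end

section
/- The number of directed walks of length l in a finite digraph with n vertices is at most n · (d_in^max · d_out^max)^{l/2}, i.e., k_l ≤ n · (d_in^max)^{l/2} · (d_out^max)^{l/2} (equivalently k_l^2 ≤ n^2 (d_in^max · d_out^max)^l). -/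
open Finset

private def walkSet {V : Type*} [Fintype V] [DecidableEq V]
    (E : V → V → Prop) [DecidableRel E] (l : ℕ) : Finset (Fin (l + 1) → V) :=
  Finset.univ.filter fun w => ∀ i : Fin l, E (w i.castSucc) (w i.succ)

private lemma walks_le_out {V : Type*} [Fintype V] [DecidableEq V]
    (E : V → V → Prop) [DecidableRel E] (l : ℕ) :
    (walkSet E l).card ≤
      Fintype.card V * (Finset.univ.sup fun v => (Finset.univ.filter fun u => E v u).card) ^ l := by
  induction l with
  | zero =>
    simpa [walkSet] using (Finset.card_filter_le Finset.univ _).trans_eq (by simp)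
  | succ l ih =>
    set D := Finset.univ.sup fun v => (Finset.univ.filter fun u => E v u).card with hD
    have key : (walkSet E (l + 1)).card ≤ D * (walkSet E l).card := by
      apply Finset.card_le_mul_card_image_of_maps_to
        (f := fun w : Fin (l + 2) → V => w ∘ Fin.castSucc) (t := walkSet E l)
      · intro w hw
        simp only [walkSet, Finset.mem_filter, Finset.mem_univ, true_and] at hw ⊢
        intro i
        have := hw i.castSucc
        simpa only [Function.comp_apply, Fin.succ_castSucc] using this
      · intro b hb
        simp only [walkSet, Finset.mem_filter, Finset.mem_univ, true_and] at hb
        have hinj : ∀ w ∈ (walkSet E (l+1)).filter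
              (fun w : Fin (l+2) → V => w ∘ Fin.castSucc = b),
            w (Fin.last (l+1)) ∈ Finset.univ.filter fun u => E (b (Fin.last l)) u := by
          intro w hw
          simp only [walkSet, Finset.mem_filter, Finset.mem_univ, true_and] at hw ⊢
          obtain ⟨hwalk, htr⟩ := hw
          have := hwalk (Fin.last l)
          have hb' : w ((Fin.last l).castSucc) = b (Fin.last l) := congrFun htr (Fin.last l)
          rw [hb'] at this
          simpa [Fin.succ_last] using this
        calc ((walkSet E (l+1)).filter
              (fun w : Fin (l+2) → V => w ∘ Fin.castSucc = b)).card
            ≤ (Finset.univ.filter fun u => E (b (Fin.last l)) u).card := by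
              apply Finset.card_le_card_of_injOn _ hinj
              intro w hw w' hw' hval
              simp only [Finset.coe_filter, Set.mem_setOf_eq] at hw hw'
              funext i
              induction i using Fin.lastCases with
              | last => exact hval
              | cast i => exact (congrFun hw.2 i).trans (congrFun hw'.2 i).symm
          _ ≤ D := Finset.le_sup (f := fun v => (Finset.univ.filter fun u => E v u).card) (Finset.mem_univ _)
    calc (walkSet E (l + 1)).card ≤ D * (walkSet E l).card := key
      _ ≤ D * (Fintype.card V * D ^ l) := Nat.mul_le_mul_left _ ih
      _ = Fintype.card V * D ^ (l + 1) := by ring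

private lemma walks_card_rev {V : Type*} [Fintype V] [DecidableEq V]
    (E : V → V → Prop) [DecidableRel E] (l : ℕ) :
    (walkSet E l).card = (walkSet (fun a b => E b a) l).card := by
  apply Finset.card_nbij (fun w => w ∘ Fin.rev)
  · intro w hw
    simp only [walkSet, Finset.mem_coe, Finset.mem_filter, Finset.mem_univ, true_and] at hw ⊢
    intro i
    have := hw i.rev
    simp only [Function.comp_apply]
    convert this using 2 <;> simp [Fin.rev_succ, Fin.rev_castSucc]
  · intro w hw w' hw' h
    funext i
    have := congrFun h i.rev
    simpa [Fin.rev_rev] using this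
  · intro w hw
    refine ⟨w ∘ Fin.rev, ?_, ?_⟩
    · simp only [walkSet, Finset.mem_coe, Finset.mem_filter, Finset.mem_univ, true_and] at hw ⊢
      intro i
      have := hw i.rev
      simp only [Function.comp_apply] at this ⊢
      convert this using 2 <;> simp [Fin.rev_succ, Fin.rev_castSucc]
    · funext i; simp [Fin.rev_rev]

/-- The number of directed walks of length `l` in a finite digraph on `n` vertices
is at most `n · (d_in^max · d_out^max)^{l/2}`; equivalently,
`k_l² ≤ n² · (d_in^max · d_out^max)^l`. -/
theorem sq_card_walks_le_max_degrees {V : Type*} [Fintype V] [DecidableEq V]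
    (E : V → V → Prop) [DecidableRel E] (l : ℕ) :
    ((Finset.univ.filter fun w : Fin (l + 1) → V =>
        ∀ i : Fin l, E (w i.castSucc) (w i.succ)).card) ^ 2 ≤
      (Fintype.card V) ^ 2 *
        ((Finset.univ.sup fun v => (Finset.univ.filter fun u => E u v).card) *
         (Finset.univ.sup fun v => (Finset.univ.filter fun u => E v u).card)) ^ l := by
  have hout := walks_le_out E l
  have hin : (walkSet E l).card ≤
      Fintype.card V * (Finset.univ.sup fun v => (Finset.univ.filter fun u => E u v).card) ^ l := by
    rw [walks_card_rev E l]
    exact walks_le_out (fun a b => E b a) l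
  have : (walkSet E l).card ^ 2 ≤
      (Fintype.card V) ^ 2 *
        ((Finset.univ.sup fun v => (Finset.univ.filter fun u => E u v).card) *
         (Finset.univ.sup fun v => (Finset.univ.filter fun u => E v u).card)) ^ l := by
    calc (walkSet E l).card ^ 2 = (walkSet E l).card * (walkSet E l).card := sq _
      _ ≤ (Fintype.card V * (Finset.univ.sup fun v => (Finset.univ.filter fun u => E u v).card) ^ l)
          * (Fintype.card V * (Finset.univ.sup fun v => (Finset.univ.filter fun u => E v u).card) ^ l) :=
        Nat.mul_le_mul hin hout
      _ = _ := by rw [mul_pow]; ring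
  exact this
end

section
/- For the empirical distribution D^m of m i.i.d. samples from a distribution D on a finite set of size η, and for any ε > 0, δ ∈ (0,1], if m ≥ (2/ε²)(log(2^η − 2) − log δ) then P(‖D^m − D‖_1 ≥ ε) ≤ δ. -/
lemma quarter_bound {x : ℝ} (h0 : 0 ≤ x) (h1 : x ≤ 1) : x * (1 - x) ≤ 1/4 := by
  nlinarith [sq_nonneg (x - 1/2)]

lemma hoeffding_bernoulli (p : ℝ) (hp0 : 0 ≤ p) (hp1 : p ≤ 1) (t : ℝ) (ht : 0 ≤ t) :
    (1 - p) + p * Real.exp t ≤ Real.exp (t * p + t ^ 2 / 8) := by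
  have hc : ∀ s : ℝ, 0 < (1 - p) + p * Real.exp s := by
    intro s
    rcases le_or_gt (Real.exp s) 1 with h | h
    · nlinarith [Real.exp_pos s]
    · nlinarith
  have hderiv_c : ∀ s : ℝ, HasDerivAt (fun s => (1 - p) + p * Real.exp s)
      (p * Real.exp s) s := by
    intro s
    simpa using ((Real.hasDerivAt_exp s).const_mul p).const_add (1 - p)
  have hP0 : ∀ s : ℝ, 0 ≤ p * Real.exp s / ((1 - p) + p * Real.exp s) :=
    fun s => div_nonneg (mul_nonneg hp0 (Real.exp_pos s).le) (hc s).le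
  have hP1 : ∀ s : ℝ, p * Real.exp s / ((1 - p) + p * Real.exp s) ≤ 1 := by
    intro s
    rw [div_le_one (hc s)]
    linarith
  have hderiv_P : ∀ s : ℝ,
      HasDerivAt (fun s => p * Real.exp s / ((1 - p) + p * Real.exp s))
      ((p * Real.exp s / ((1 - p) + p * Real.exp s)) *
        (1 - p * Real.exp s / ((1 - p) + p * Real.exp s))) s := by
    intro s
    have h := ((Real.hasDerivAt_exp s).const_mul p).div (hderiv_c s) (hc s).ne'
    refine h.congr_deriv ?_
    have h0 := (hc s).ne'
    field_simp
  have hderiv_h : ∀ s : ℝ,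
      HasDerivAt (fun s => p + s / 4 - p * Real.exp s / ((1 - p) + p * Real.exp s))
      (1 / 4 - (p * Real.exp s / ((1 - p) + p * Real.exp s)) *
        (1 - p * Real.exp s / ((1 - p) + p * Real.exp s))) s := by
    intro s
    have := (((hasDerivAt_id s).div_const 4).const_add p).sub (hderiv_P s)
    exact this.congr_deriv (by ring)
  have hmono : Monotone (fun s => p + s / 4 - p * Real.exp s / ((1 - p) + p * Real.exp s)) := by
    apply monotone_of_deriv_nonneg
    · exact fun s => (hderiv_h s).differentiableAt
    · intro s
      rw [(hderiv_h s).deriv]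
      have := quarter_bound (hP0 s) (hP1 s)
      linarith
  have hhn : ∀ s : ℝ, 0 ≤ s →
      0 ≤ p + s / 4 - p * Real.exp s / ((1 - p) + p * Real.exp s) := by
    intro s hs
    have h2 := hmono hs
    simp only [Real.exp_zero, mul_one] at h2
    have h3 : p + 0 / 4 - p / (1 - p + p) = 0 := by norm_num
    linarith
  have hderiv_g : ∀ s : ℝ,
      HasDerivAt (fun s => s * p + s ^ 2 / 8 - Real.log ((1 - p) + p * Real.exp s))
      (p + s / 4 - p * Real.exp s / ((1 - p) + p * Real.exp s)) s := by
    intro s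
    have h1 : HasDerivAt (fun s : ℝ => Real.log ((1 - p) + p * Real.exp s))
        (p * Real.exp s / ((1 - p) + p * Real.exp s)) s := (hderiv_c s).log (hc s).ne'
    have h2 := (((hasDerivAt_id s).mul_const p).add
      (((hasDerivAt_pow 2 s)).div_const 8)).sub h1
    refine h2.congr_deriv ?_
    simp
    ring
  have hgmono : MonotoneOn
      (fun s => s * p + s ^ 2 / 8 - Real.log ((1 - p) + p * Real.exp s)) (Set.Ici 0) := by
    apply monotoneOn_of_deriv_nonneg (convex_Ici 0)
    · exact fun s _ => ((hderiv_g s).differentiableAt).continuousAt.continuousWithinAt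
    · exact fun s _ => ((hderiv_g s).differentiableAt).differentiableWithinAt
    · intro s hs
      rw [(hderiv_g s).deriv]
      exact hhn s (le_of_lt (by simpa using hs))
  have hgt := hgmono Set.self_mem_Ici (Set.mem_Ici.mpr ht) ht
  simp only [zero_mul, zero_add] at hgt
  have hg0 : (0:ℝ) ^ 2 / 8 - Real.log ((1 - p) + p * Real.exp 0) = 0 := by norm_num
  have hlog : Real.log ((1 - p) + p * Real.exp t) ≤ t * p + t ^ 2 / 8 := by linarith
  calc (1 - p) + p * Real.exp t
      = Real.exp (Real.log ((1 - p) + p * Real.exp t)) := (Real.exp_log (hc t)).symm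
    _ ≤ Real.exp (t * p + t ^ 2 / 8) := Real.exp_le_exp.mpr hlog

lemma chernoff {A : Type*} [Fintype A] [DecidableEq A]
    (D : A → ℝ) (hD : ∀ a, 0 ≤ D a) (hDs : ∑ a, D a = 1)
    (ε : ℝ) (hε : 0 < ε) (m : ℕ) (S : Finset A) :
    ∑ x ∈ Finset.univ.filter
        (fun x : Fin m → A =>
          (∑ a ∈ S, D a) + ε / 2 ≤ ((Finset.univ.filter fun j => x j ∈ S).card : ℝ) / m),
      ∏ j, D (x j) ≤ Real.exp (-(m * ε ^ 2 / 2)) := by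
  classical
  have hp0 : (0:ℝ) ≤ ∑ a ∈ S, D a := Finset.sum_nonneg fun a _ => hD a
  rcases Nat.eq_zero_or_pos m with rfl | hm0
  · rw [Finset.filter_false_of_mem, Finset.sum_empty]
    · positivity
    · intro x _
      simp only [not_le, Nat.cast_zero, div_zero]
      linarith
  have hmR : (0:ℝ) < m := by exact_mod_cast hm0
  set p := ∑ a ∈ S, D a with hpdef
  have hp1 : p ≤ 1 := by
    rw [hpdef, ← hDs]
    exact Finset.sum_le_sum_of_subset_of_nonneg (Finset.subset_univ S) fun a _ _ => hD a
  have hw : ∀ x : Fin m → A, (0:ℝ) ≤ ∏ j, D (x j) :=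
    fun x => Finset.prod_nonneg fun j _ => hD (x j)
  set N : (Fin m → A) → ℕ := fun x => (Finset.univ.filter fun j => x j ∈ S).card with hNdef
  set c : ℝ := Real.exp (-(2 * ε * (m * (p + ε / 2)))) with hcdef
  have hc0 : 0 < c := Real.exp_pos _
  have step1 : ∑ x ∈ Finset.univ.filter
        (fun x : Fin m → A => p + ε / 2 ≤ ((N x : ℝ)) / m),
      ∏ j, D (x j)
      ≤ ∑ x ∈ Finset.univ.filter
        (fun x : Fin m → A => p + ε / 2 ≤ ((N x : ℝ)) / m),
      (∏ j, D (x j)) * (Real.exp (2 * ε * (N x : ℝ)) * c) := by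
    apply Finset.sum_le_sum
    intro x hx
    have hx' : p + ε / 2 ≤ (N x : ℝ) / m := (Finset.mem_filter.mp hx).2
    have hN : (m : ℝ) * (p + ε / 2) ≤ (N x : ℝ) := by
      have h2 := (le_div_iff₀ hmR).mp hx'
      linarith
    have h1 : (1:ℝ) ≤ Real.exp (2 * ε * (N x : ℝ)) * c := by
      rw [hcdef, ← Real.exp_add]
      rw [← Real.exp_zero]
      apply Real.exp_le_exp.mpr
      nlinarith
    exact le_mul_of_one_le_right (hw x) h1
  have step2 : ∑ x ∈ Finset.univ.filter
        (fun x : Fin m → A => p + ε / 2 ≤ ((N x : ℝ)) / m),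
      (∏ j, D (x j)) * (Real.exp (2 * ε * (N x : ℝ)) * c)
      ≤ ∑ x : Fin m → A, (∏ j, D (x j)) * (Real.exp (2 * ε * (N x : ℝ)) * c) := by
    apply Finset.sum_le_sum_of_subset_of_nonneg (Finset.filter_subset _ _)
    intro x _ _
    have := hw x
    positivity
  have step3 : ∑ x : Fin m → A, (∏ j, D (x j)) * (Real.exp (2 * ε * (N x : ℝ)) * c)
      = c * ∑ x : Fin m → A, ∏ j, (D (x j) * Real.exp (2 * ε * (if x j ∈ S then (1:ℝ) else 0))) := by
    rw [Finset.mul_sum]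
    apply Finset.sum_congr rfl
    intro x _
    have hNx : (N x : ℝ) = ∑ j : Fin m, (if x j ∈ S then (1:ℝ) else 0) := by
      rw [hNdef]
      simp only [Finset.card_filter]
      push_cast
      rfl
    rw [Finset.prod_mul_distrib, ← Real.exp_sum]
    have : (∑ j : Fin m, 2 * ε * (if x j ∈ S then (1:ℝ) else 0)) = 2 * ε * (N x : ℝ) := by
      rw [hNx, Finset.mul_sum]
    rw [this]
    ring
  have step4 : ∑ x : Fin m → A, ∏ j, (D (x j) * Real.exp (2 * ε * (if x j ∈ S then (1:ℝ) else 0)))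
      = (∑ a, D a * Real.exp (2 * ε * (if a ∈ S then (1:ℝ) else 0))) ^ m :=
    (Fintype.sum_pow (fun a : A => D a * Real.exp (2 * ε * (if a ∈ S then (1:ℝ) else 0))) m).symm
  have step5 : (∑ a, D a * Real.exp (2 * ε * (if a ∈ S then (1:ℝ) else 0)))
      = (1 - p) + p * Real.exp (2 * ε) := by
    have : ∀ a : A, D a * Real.exp (2 * ε * (if a ∈ S then (1:ℝ) else 0))
        = (if a ∈ S then D a * Real.exp (2 * ε) else D a) := by
      intro a
      by_cases h : a ∈ S <;> simp [h]
    rw [Finset.sum_congr rfl fun a _ => this a, Finset.sum_ite,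
      Finset.filter_mem_eq_inter, Finset.univ_inter, ← Finset.sum_mul]
    have h2 : ∑ a ∈ Finset.univ.filter (fun a => a ∉ S), D a = 1 - p := by
      have := Finset.sum_filter_add_sum_filter_not Finset.univ (fun a => a ∈ S) D
      rw [Finset.filter_mem_eq_inter, Finset.univ_inter] at this
      rw [hpdef]; linarith [hDs ▸ this]
    rw [h2]; ring
  have step6 : ((1 - p) + p * Real.exp (2 * ε)) ^ m
      ≤ Real.exp (2 * ε * p + (2 * ε) ^ 2 / 8) ^ m := by
    apply pow_le_pow_left₀
    · have h := Real.exp_pos (2 * ε)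
      nlinarith
    · exact hoeffding_bernoulli p hp0 hp1 (2 * ε) (by linarith)
  have step7 : c * Real.exp (2 * ε * p + (2 * ε) ^ 2 / 8) ^ m
      = Real.exp (-(m * ε ^ 2 / 2)) := by
    rw [hcdef, ← Real.exp_nat_mul, ← Real.exp_add]
    congr 1
    ring
  calc ∑ x ∈ Finset.univ.filter
        (fun x : Fin m → A => p + ε / 2 ≤ ((N x : ℝ)) / m),
      ∏ j, D (x j)
      ≤ ∑ x : Fin m → A, (∏ j, D (x j)) * (Real.exp (2 * ε * (N x : ℝ)) * c) :=
        le_trans step1 step2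
    _ = c * ∑ x : Fin m → A, ∏ j, (D (x j) * Real.exp (2 * ε * (if x j ∈ S then (1:ℝ) else 0))) := step3
    _ = c * ((1 - p) + p * Real.exp (2 * ε)) ^ m := by rw [step4, step5]
    _ ≤ c * Real.exp (2 * ε * p + (2 * ε) ^ 2 / 8) ^ m :=
        mul_le_mul_of_nonneg_left step6 hc0.le
    _ = Real.exp (-(m * ε ^ 2 / 2)) := step7

lemma sum_biUnion_le' {ι α : Type*} [DecidableEq α] (s : Finset ι) (t : ι → Finset α)
    (f : α → ℝ) (hf : ∀ a, 0 ≤ f a) :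
    ∑ x ∈ s.biUnion t, f x ≤ ∑ i ∈ s, ∑ x ∈ t i, f x := by
  classical
  induction s using Finset.induction_on with
  | empty => simp
  | insert a s hi ih =>
    rw [Finset.biUnion_insert, Finset.sum_insert hi]
    have h1 : ∑ x ∈ t a ∪ s.biUnion t, f x
        ≤ ∑ x ∈ t a, f x + ∑ x ∈ s.biUnion t, f x := by
      rw [← Finset.union_sdiff_self_eq_union, Finset.sum_union Finset.disjoint_sdiff]
      have := Finset.sum_le_sum_of_subset_of_nonneg
        (Finset.sdiff_subset : s.biUnion t \ t a ⊆ s.biUnion t) (fun x _ _ => hf x)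
      linarith
    linarith


/-- Empirical distribution of the sample `x : Fin m → A`. -/
noncomputable def empDist {A : Type*} [DecidableEq A] {m : ℕ}
    (x : Fin m → A) (a : A) : ℝ :=
  (Finset.univ.filter fun j => x j = a).card / m

/-- Sampling bound: for `m` i.i.d. samples from a distribution `D` on a finite set
of size `η`, if `m ≥ (2/ε²)(log(2^η − 2) − log δ)` then
`P(‖D^m − D‖₁ ≥ ε) ≤ δ`. The i.i.d. sampling is modeled by the product
distribution on `Fin m → A`, assigning probability `∏ j, D (x j)` to a sample `x`. -/
theorem sampling_bound {A : Type*} [Fintype A] [DecidableEq A]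
    (D : A → ℝ) (hD : ∀ a, 0 ≤ D a) (hDs : ∑ a, D a = 1)
    (hη : 2 ≤ Fintype.card A)
    (ε δ : ℝ) (hε : 0 < ε) (hδ0 : 0 < δ) (hδ1 : δ ≤ 1) (m : ℕ)
    (hm : (2 / ε ^ 2) * (Real.log (2 ^ Fintype.card A - 2) - Real.log δ) ≤ m) :
    ∑ x ∈ Finset.univ.filter
        (fun x : Fin m → A => ε ≤ ∑ a, |empDist x a - D a|),
      ∏ j, D (x j) ≤ δ := by
  classical
  have hA : Nonempty A := Fintype.card_pos_iff.mp (by omega)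
  have hK : (2:ℝ) ≤ 2 ^ Fintype.card A - 2 := by
    have h4 : (4:ℝ) ≤ 2 ^ Fintype.card A := by
      calc (4:ℝ) = 2 ^ 2 := by norm_num
        _ ≤ 2 ^ Fintype.card A := pow_le_pow_right₀ one_le_two hη
    linarith
  have hKpos : (0:ℝ) < 2 ^ Fintype.card A - 2 := by linarith
  have hlogδ : Real.log δ ≤ 0 := Real.log_nonpos hδ0.le hδ1
  have hlogK : 0 < Real.log (2 ^ Fintype.card A - 2) := Real.log_pos (by linarith)
  have hε2 : (0:ℝ) < ε ^ 2 := pow_pos hε 2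
  have hmpos : 0 < m := by
    rcases Nat.eq_zero_or_pos m with rfl | h
    · exfalso
      have : (0:ℝ) < (2 / ε ^ 2) * (Real.log (2 ^ Fintype.card A - 2) - Real.log δ) := by
        apply mul_pos (by positivity)
        linarith
      simp at hm
      linarith
    · exact h
  have hmR : (0:ℝ) < m := by exact_mod_cast hmpos
  have hw : ∀ x : Fin m → A, (0:ℝ) ≤ ∏ j, D (x j) :=
    fun x => Finset.prod_nonneg fun j _ => hD (x j)
  -- collection of proper nonempty subsets
  set 𝒮 : Finset (Finset A) := Finset.univ \ {∅, Finset.univ} with h𝒮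
  have hune : (Finset.univ : Finset A) ≠ ∅ := Finset.univ_nonempty.ne_empty
  have hcard𝒮 : 𝒮.card = 2 ^ Fintype.card A - 2 := by
    rw [h𝒮, Finset.card_sdiff_of_subset (Finset.subset_univ _), Finset.card_univ, Fintype.card_finset]
    congr 1
    rw [Finset.card_insert_of_notMem (by simp [Ne.symm hune]), Finset.card_singleton]
  -- events
  set E : Finset A → Finset (Fin m → A) := fun S => Finset.univ.filter
      (fun x : Fin m → A =>
        (∑ a ∈ S, D a) + ε / 2 ≤ ((Finset.univ.filter fun j => x j ∈ S).card : ℝ) / m)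
    with hE
  -- inclusion of the main event into the union
  have hincl : Finset.univ.filter
      (fun x : Fin m → A => ε ≤ ∑ a, |empDist x a - D a|) ⊆ 𝒮.biUnion E := by
    intro x hx
    have hxe : ε ≤ ∑ a, |empDist x a - D a| := (Finset.mem_filter.mp hx).2
    set S : Finset A := Finset.univ.filter (fun a => D a < empDist x a) with hSdef
    -- empirical distribution sums to 1
    have hcards : (Finset.univ : Finset (Fin m)).card
        = ∑ a : A, (Finset.univ.filter fun j => x j = a).card :=
      Finset.card_eq_sum_card_fiberwise (fun j _ => Finset.mem_univ (x j))
    have hemp1 : ∑ a, empDist x a = 1 := by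
      unfold empDist
      rw [← Finset.sum_div]
      rw [div_eq_one_iff_eq hmR.ne']
      rw [← Nat.cast_sum, ← hcards, Finset.card_univ, Fintype.card_fin]
    have hsum0 : ∑ a, (empDist x a - D a) = 0 := by
      rw [Finset.sum_sub_distrib, hemp1, hDs]; ring
    have hsplit : ∑ a ∈ S, (empDist x a - D a)
        + ∑ a ∈ Finset.univ.filter (fun a => ¬ D a < empDist x a), (empDist x a - D a) = 0 := by
      rw [hSdef, Finset.sum_filter_add_sum_filter_not]; exact hsum0
    have habs : ∑ a, |empDist x a - D a|
        = ∑ a ∈ S, (empDist x a - D a)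
          - ∑ a ∈ Finset.univ.filter (fun a => ¬ D a < empDist x a), (empDist x a - D a) := by
      rw [← Finset.sum_filter_add_sum_filter_not Finset.univ (fun a => D a < empDist x a)
        (fun a => |empDist x a - D a|), hSdef]
      have h1 : ∀ a ∈ Finset.univ.filter (fun a => D a < empDist x a),
          |empDist x a - D a| = empDist x a - D a := fun a ha =>
        abs_of_pos (sub_pos.mpr (Finset.mem_filter.mp ha).2)
      have h2 : ∀ a ∈ Finset.univ.filter (fun a => ¬ D a < empDist x a),
          |empDist x a - D a| = -(empDist x a - D a) := by
        intro a ha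
        have := (Finset.mem_filter.mp ha).2
        push_neg at this
        exact abs_of_nonpos (by linarith)
      rw [Finset.sum_congr rfl h1, Finset.sum_congr rfl h2, Finset.sum_neg_distrib]
      ring
    have hhalf : ε / 2 ≤ ∑ a ∈ S, (empDist x a - D a) := by
      rw [habs] at hxe
      linarith
    have hSne : S ≠ ∅ := by
      intro h
      rw [h, Finset.sum_empty] at hhalf
      linarith
    have hSnu : S ≠ Finset.univ := by
      intro h
      rw [h, hsum0] at hhalf
      linarith
    -- counting fibers
    have hfib : ∀ a ∈ S, (Finset.univ.filter (fun j => x j ∈ S)).filter (fun j => x j = a)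
        = Finset.univ.filter (fun j => x j = a) := by
      intro a ha
      ext j
      simp only [Finset.mem_filter, Finset.mem_univ, true_and]
      constructor
      · rintro ⟨_, h⟩; exact h
      · intro h; exact ⟨h ▸ ha, h⟩
    have hNS : ((Finset.univ.filter fun j : Fin m => x j ∈ S).card : ℝ)
        = ∑ a ∈ S, ((Finset.univ.filter fun j => x j = a).card : ℝ) := by
      have := Finset.card_eq_sum_card_fiberwise
        (f := x) (s := Finset.univ.filter (fun j => x j ∈ S)) (t := S)
        (fun j hj => (Finset.mem_filter.mp hj).2)
      have this2 := this.trans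
        (Finset.sum_congr rfl (fun a ha => congrArg Finset.card (hfib a ha)))
      exact_mod_cast congrArg (Nat.cast (R := ℝ)) this2
    have hmemE : x ∈ E S := by
      rw [hE, Finset.mem_filter]
      refine ⟨Finset.mem_univ x, ?_⟩
      have hsum : ∑ a ∈ S, empDist x a
          = ((Finset.univ.filter fun j : Fin m => x j ∈ S).card : ℝ) / m := by
        unfold empDist
        rw [← Finset.sum_div, hNS]
      have h3 : ∑ a ∈ S, (empDist x a - D a) = ∑ a ∈ S, empDist x a - ∑ a ∈ S, D a :=
        Finset.sum_sub_distrib _ _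
      rw [← hsum]
      linarith
    exact Finset.mem_biUnion.mpr ⟨S, by
      rw [h𝒮, Finset.mem_sdiff]
      exact ⟨Finset.mem_univ S, by simp [hSne, hSnu]⟩, hmemE⟩
  -- union bound + Chernoff
  have hub : ∑ x ∈ Finset.univ.filter
        (fun x : Fin m → A => ε ≤ ∑ a, |empDist x a - D a|),
      ∏ j, D (x j)
      ≤ (2 ^ Fintype.card A - 2 : ℝ) * Real.exp (-(m * ε ^ 2 / 2)) := by
    calc ∑ x ∈ Finset.univ.filter
          (fun x : Fin m → A => ε ≤ ∑ a, |empDist x a - D a|),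
        ∏ j, D (x j)
        ≤ ∑ x ∈ 𝒮.biUnion E, ∏ j, D (x j) :=
          Finset.sum_le_sum_of_subset_of_nonneg hincl (fun x _ _ => hw x)
      _ ≤ ∑ S ∈ 𝒮, ∑ x ∈ E S, ∏ j, D (x j) := sum_biUnion_le' _ _ _ hw
      _ ≤ ∑ _S ∈ 𝒮, Real.exp (-(m * ε ^ 2 / 2)) :=
          Finset.sum_le_sum (fun S _ => chernoff D hD hDs ε hε m S)
      _ = (𝒮.card : ℝ) * Real.exp (-(m * ε ^ 2 / 2)) := by
          rw [Finset.sum_const, nsmul_eq_mul]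
      _ = (2 ^ Fintype.card A - 2 : ℝ) * Real.exp (-(m * ε ^ 2 / 2)) := by
          rw [hcard𝒮]
          congr 1
          have h2 : 2 ≤ 2 ^ Fintype.card A := by
            calc 2 ≤ 2 ^ 1 := le_refl _
              _ ≤ 2 ^ Fintype.card A := Nat.pow_le_pow_right (by norm_num) (by omega)
          push_cast [Nat.cast_sub h2]
          norm_num
  -- numerics
  have h1 : Real.log (2 ^ Fintype.card A - 2) - Real.log δ ≤ m * ε ^ 2 / 2 := by
    have h2 : (2 / ε ^ 2) * (Real.log (2 ^ Fintype.card A - 2) - Real.log δ)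
        = 2 * (Real.log (2 ^ Fintype.card A - 2) - Real.log δ) / ε ^ 2 := by ring
    rw [h2] at hm
    have h3 := (div_le_iff₀ hε2).mp hm
    nlinarith
  have h4 : Real.exp (-(m * ε ^ 2 / 2))
      ≤ δ / (2 ^ Fintype.card A - 2 : ℝ) := by
    have h5 : Real.exp (-(m * ε ^ 2 / 2))
        ≤ Real.exp (Real.log δ - Real.log (2 ^ Fintype.card A - 2)) :=
      Real.exp_le_exp.mpr (by linarith)
    rwa [Real.exp_sub, Real.exp_log hδ0, Real.exp_log hKpos] at h5
  calc ∑ x ∈ Finset.univ.filter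
        (fun x : Fin m → A => ε ≤ ∑ a, |empDist x a - D a|),
      ∏ j, D (x j)
      ≤ (2 ^ Fintype.card A - 2 : ℝ) * Real.exp (-(m * ε ^ 2 / 2)) := hub
    _ ≤ (2 ^ Fintype.card A - 2 : ℝ) * (δ / (2 ^ Fintype.card A - 2 : ℝ)) :=
        mul_le_mul_of_nonneg_left h4 hKpos.le
    _ = δ := by field_simp
end
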